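/- Let (φₖ)_{k∈ℕ^d} be a complete orthonormal family in L²(ν) for a probability measure ν on ℝ^d, let y ∈ L²(ν) with expansion y = Σₖ αₖφₖ, and let Γ ⊂ ℕ^d be finite. Suppose (X^m, S^m), m = 1,…,M, are i.i.d. with X¹ ~ ν and S¹ square integrable satisfying E[S¹ | X¹] = y(X¹). Define the estimator ȳ = Σ_{k∈Γ} ᾱₖ φₖ with ᾱₖ = M^{-1} Σ_m S^m φₖ(X^m). Then E[‖ȳ - y‖²_{L²(ν)}] ≤ Σ_{k∉Γ} αₖ² + (L_Γ/M) E[(S¹)²], where L_Γ = Σ_{k∈Γ} ‖φₖ‖²_∞. -/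

import Mathlib

open MeasureTheory Real Set

section aux
variable {β : Type*} [MeasurableSpace β] {μ : Measure β}

lemma my_integrable_mul_of_memL2 {f g : β → ℝ} (hf : MemLp f 2 μ) (hg : MemLp g 2 μ) :
    Integrable (fun x => f x * g x) μ := by
  refine ((hf.integrable_sq.add hg.integrable_sq).const_mul (2⁻¹ : ℝ)).mono'
    (hf.1.mul hg.1) (ae_of_all _ fun x => ?_)
  rw [norm_eq_abs, abs_mul]
  simp only [Pi.add_apply]
  nlinarith [sq_nonneg (|f x| - |g x|), sq_abs (f x), sq_abs (g x), abs_nonneg (f x),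
    abs_nonneg (g x)]

end aux

local notation "⟪" x ", " y "⟫" => @inner ℝ _ _ x y

lemma my_parseval {d : ℕ}
    (ν : Measure (Fin d → ℝ)) [IsProbabilityMeasure ν]
    (φ : (Fin d → ℕ) → (Fin d → ℝ) → ℝ)
    (hφmeas : ∀ k, Measurable (φ k))
    (hortho : ∀ k k' : Fin d → ℕ,
      ∫ x, φ k x * φ k' x ∂ν = if k = k' then 1 else 0)
    (hcomplete : ∀ v : (Fin d → ℝ) → ℝ, Measurable v →
      Integrable (fun x => (v x)^2) ν →
      (∀ k, ∫ x, v x * φ k x ∂ν = 0) → ∀ᵐ x ∂ν, v x = 0)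
    (y : (Fin d → ℝ) → ℝ) (hymeas : Measurable y)
    (hyL2 : Integrable (fun x => (y x)^2) ν)
    (Cφ : (Fin d → ℕ) → ℝ) (hCφ : ∀ k x, |φ k x| ≤ Cφ k) :
    HasSum (fun k => (∫ x, y x * φ k x ∂ν)^2) (∫ x, (y x)^2 ∂ν) := by
  have hφmem : ∀ k, MemLp (φ k) 2 ν := fun k =>
    MemLp.of_bound (hφmeas k).aestronglyMeasurable (Cφ k)
      (ae_of_all _ fun x => by simpa [Real.norm_eq_abs] using hCφ k x)
  have hymem : MemLp y 2 ν := (memLp_two_iff_integrable_sq hymeas.aestronglyMeasurable).2 hyL2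
  set e : (Fin d → ℕ) → Lp ℝ 2 ν := fun k => (hφmem k).toLp (φ k) with he
  have hinner : ∀ (f g : (Fin d → ℝ) → ℝ) (hf : MemLp f 2 ν) (hg : MemLp g 2 ν),
      ⟪hf.toLp f, hg.toLp g⟫ = ∫ x, f x * g x ∂ν := by
    intro f g hf hg
    rw [L2.inner_def]
    refine integral_congr_ae ?_
    filter_upwards [hf.coeFn_toLp, hg.coeFn_toLp] with x h1 h2
    simp [h1, h2, RCLike.inner_apply, starRingEnd_apply]
    ring
  have hon : Orthonormal ℝ e := by
    rw [orthonormal_iff_ite]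
    intro k k'
    rw [he]
    simpa [hinner] using hortho k k'
  have hbot : (Submodule.span ℝ (Set.range e))ᗮ = ⊥ := by
    rw [Submodule.eq_bot_iff]
    intro v hv
    have hvk : ∀ k, ∫ x, (v : (Fin d → ℝ) → ℝ) x * φ k x ∂ν = 0 := by
      intro k
      have h0 : ⟪e k, v⟫ = 0 := hv (e k) (Submodule.subset_span (Set.mem_range_self k))
      rw [L2.inner_def] at h0
      rw [← h0]
      refine integral_congr_ae ?_
      filter_upwards [(hφmem k).coeFn_toLp] with x h1
      have h1' : (e k : (Fin d → ℝ) → ℝ) x = φ k x := h1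
      simp [h1', RCLike.inner_apply, starRingEnd_apply, mul_comm]
    have hmeas : Measurable (v : (Fin d → ℝ) → ℝ) := (Lp.stronglyMeasurable v).measurable
    have hint : Integrable (fun x => ((v : (Fin d → ℝ) → ℝ) x)^2) ν :=
      (memLp_two_iff_integrable_sq (Lp.memLp v).1).1 (Lp.memLp v)
    have := hcomplete _ hmeas hint hvk
    exact Lp.eq_zero_iff_ae_eq_zero.2 this
  have hs := (HilbertBasis.mkOfOrthogonalEqBot hon hbot).hasSum_inner_mul_inner
    (hymem.toLp y) (hymem.toLp y)
  have hb : ∀ i, (HilbertBasis.mkOfOrthogonalEqBot hon hbot) i = e i := fun i =>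
    congrFun (HilbertBasis.coe_mkOfOrthogonalEqBot hon hbot) i
  simp only [hb] at hs
  have h1 : ∀ k, ⟪hymem.toLp y, e k⟫ = ∫ x, y x * φ k x ∂ν := fun k => hinner _ _ hymem (hφmem k)
  have h2 : ∀ k, ⟪e k, hymem.toLp y⟫ = ∫ x, y x * φ k x ∂ν := fun k => by
    rw [he]
    rw [hinner _ _ (hφmem k) hymem]
    simp_rw [mul_comm]
  have h3 : ⟪hymem.toLp y, hymem.toLp y⟫ = ∫ x, (y x)^2 ∂ν := by
    rw [hinner _ _ hymem hymem]
    simp_rw [sq]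
  rw [h3] at hs
  have hfun : (fun k => (∫ x, y x * φ k x ∂ν)^2)
      = fun i => ⟪hymem.toLp y, e i⟫ * ⟪e i, hymem.toLp y⟫ := funext fun k => by rw [h1, h2, sq]
  rw [hfun]
  exact hs


lemma my_expand {d : ℕ}
    (ν : Measure (Fin d → ℝ)) [IsProbabilityMeasure ν]
    (φ : (Fin d → ℕ) → (Fin d → ℝ) → ℝ)
    (hortho : ∀ k k' : Fin d → ℕ,
      ∫ x, φ k x * φ k' x ∂ν = if k = k' then 1 else 0)
    (y : (Fin d → ℝ) → ℝ)
    (hyL2 : Integrable (fun x => (y x)^2) ν)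
    (hyφint : ∀ k, Integrable (fun x => y x * φ k x) ν)
    (hφφint : ∀ k k', Integrable (fun x => φ k x * φ k' x) ν)
    (α : (Fin d → ℕ) → ℝ) (hα : ∀ k, α k = ∫ x, y x * φ k x ∂ν)
    (Γ : Finset (Fin d → ℕ)) (c : (Fin d → ℕ) → ℝ) :
    ∫ x, ((∑ k ∈ Γ, c k * φ k x) - y x)^2 ∂ν
      = ∑ k ∈ Γ, (c k - α k)^2 + (∫ x, (y x)^2 ∂ν - ∑ k ∈ Γ, (α k)^2) := by
  classical
  have key : ∀ x, ((∑ k ∈ Γ, c k * φ k x) - y x)^2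
      = (∑ k ∈ Γ, ∑ k' ∈ Γ, (c k * c k') * (φ k x * φ k' x))
        - (∑ k ∈ Γ, (2 * c k) * (y x * φ k x)) + (y x)^2 := by
    intro x
    rw [sub_sq, sq, Finset.sum_mul_sum]
    congr 1
    congr 1
    · exact Finset.sum_congr rfl fun k _ => Finset.sum_congr rfl fun k' _ => by ring
    · rw [mul_assoc, Finset.sum_mul, Finset.mul_sum]
      exact Finset.sum_congr rfl fun k _ => by ring
  simp_rw [key]
  have hB : Integrable (fun x => ∑ k ∈ Γ, ∑ k' ∈ Γ, (c k * c k') * (φ k x * φ k' x)) ν :=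
    integrable_finset_sum _ fun k _ => integrable_finset_sum _ fun k' _ =>
      (hφφint k k').const_mul _
  have hC : Integrable (fun x => ∑ k ∈ Γ, (2 * c k) * (y x * φ k x)) ν :=
    integrable_finset_sum _ fun k _ => (hyφint k).const_mul _
  have hBC : Integrable (fun x => (∑ k ∈ Γ, ∑ k' ∈ Γ, (c k * c k') * (φ k x * φ k' x))
      - ∑ k ∈ Γ, (2 * c k) * (y x * φ k x)) ν := hB.sub hC
  rw [integral_add hBC hyL2, integral_sub hB hC,
    integral_finset_sum _ fun k _ => integrable_finset_sum _ fun k' _ =>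
      (hφφint k k').const_mul _,
    integral_finset_sum _ fun k _ => (hyφint k).const_mul _]
  have hin : ∀ k, ∫ a, ∑ k' ∈ Γ, c k * c k' * (φ k a * φ k' a) ∂ν
      = ∑ k' ∈ Γ, c k * c k' * ∫ a, φ k a * φ k' a ∂ν := by
    intro k
    rw [integral_finset_sum _ fun k' _ => (hφφint k k').const_mul _]
    simp_rw [integral_const_mul]
  simp_rw [integral_const_mul, hin, hortho, ← hα]
  have hdiag : ∀ k ∈ Γ, (∑ k' ∈ Γ, (c k * c k') * if k = k' then (1:ℝ) else 0) = c k^2 := by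
    intro k hk
    rw [Finset.sum_eq_single_of_mem k hk]
    · simp [sq]
    · intro k' _ hne
      simp [Ne.symm hne]
  rw [Finset.sum_congr rfl hdiag]
  have : ∑ k ∈ Γ, (c k - α k)^2
      = ∑ k ∈ Γ, c k^2 - ∑ k ∈ Γ, (2 * c k * α k) + ∑ k ∈ Γ, (α k)^2 := by
    rw [← Finset.sum_sub_distrib, ← Finset.sum_add_distrib]
    exact Finset.sum_congr rfl fun k _ => by ring
  rw [this]
  ring



theorem stmt_11 (d : ℕ) (hd : 1 ≤ d)
    {Ω : Type*} [MeasurableSpace Ω] (P : Measure Ω) [IsProbabilityMeasure P]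
    (ν : Measure (Fin d → ℝ)) [IsProbabilityMeasure ν]
    (φ : (Fin d → ℕ) → (Fin d → ℝ) → ℝ)
    (hφmeas : ∀ k, Measurable (φ k))
    (hortho : ∀ k k' : Fin d → ℕ,
      ∫ x, φ k x * φ k' x ∂ν = if k = k' then 1 else 0)
    (hcomplete : ∀ v : (Fin d → ℝ) → ℝ, Measurable v →
      Integrable (fun x => (v x)^2) ν →
      (∀ k, ∫ x, v x * φ k x ∂ν = 0) → ∀ᵐ x ∂ν, v x = 0)
    (y : (Fin d → ℝ) → ℝ) (hymeas : Measurable y)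
    (hyL2 : Integrable (fun x => (y x)^2) ν)
    (α : (Fin d → ℕ) → ℝ) (hα : ∀ k, α k = ∫ x, y x * φ k x ∂ν)
    (Γ : Finset (Fin d → ℕ))
    (M : ℕ) (hM : 0 < M)
    (X : Fin M → Ω → (Fin d → ℝ)) (S : Fin M → Ω → ℝ)
    (hXmeas : ∀ m, Measurable (X m)) (hSmeas : ∀ m, Measurable (S m))
    (hindep : ProbabilityTheory.iIndepFun
      (fun (m : Fin M) ω => (X m ω, S m ω)) P)
    (hident : ∀ m : Fin M,
      Measure.map (fun ω => (X m ω, S m ω)) P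
        = Measure.map (fun ω => (X ⟨0, hM⟩ ω, S ⟨0, hM⟩ ω)) P)
    (hlaw : Measure.map (X ⟨0, hM⟩) P = ν)
    (hSL2 : Integrable (fun ω => (S ⟨0, hM⟩ ω)^2) P)
    (hcond : P[fun ω => S ⟨0, hM⟩ ω | MeasurableSpace.comap (X ⟨0, hM⟩) inferInstance]
      =ᵐ[P] fun ω => y (X ⟨0, hM⟩ ω))
    (Cφ : (Fin d → ℕ) → ℝ) (hCφ : ∀ k x, |φ k x| ≤ Cφ k) :
    ∫ ω, (∫ x, ((∑ k ∈ Γ, ((M : ℝ)⁻¹ * ∑ m, S m ω * φ k (X m ω)) * φ k x) - y x)^2 ∂ν) ∂P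
      ≤ (∑' k : {k : Fin d → ℕ // k ∉ Γ}, (α k)^2)
        + ((∑ k ∈ Γ, (Cφ k)^2) / M) * ∫ ω, (S ⟨0, hM⟩ ω)^2 ∂P := by
  classical
  set x0 : Fin M := ⟨0, hM⟩ with hx0
  have hCφ0 : ∀ k, 0 ≤ Cφ k := fun k => le_trans (abs_nonneg _) (hCφ k (fun _ => 0))
  have hφmem : ∀ k, MemLp (φ k) 2 ν := fun k =>
    MemLp.of_bound (hφmeas k).aestronglyMeasurable (Cφ k)
      (ae_of_all _ fun x => by simpa [Real.norm_eq_abs] using hCφ k x)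
  have hymem : MemLp y 2 ν := (memLp_two_iff_integrable_sq hymeas.aestronglyMeasurable).2 hyL2
  have hyφint : ∀ k, Integrable (fun x => y x * φ k x) ν := fun k =>
    my_integrable_mul_of_memL2 hymem (hφmem k)
  have hφφint : ∀ k k', Integrable (fun x => φ k x * φ k' x) ν := fun k k' =>
    my_integrable_mul_of_memL2 (hφmem k) (hφmem k')
  have hpairmeas : ∀ m, Measurable (fun ω => (X m ω, S m ω)) :=
    fun m => (hXmeas m).prodMk (hSmeas m)
  have hmap : ∀ (m : Fin M) (h : (Fin d → ℝ) × ℝ → ℝ), Measurable h →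
      ∫ ω, h (X m ω, S m ω) ∂P = ∫ ω, h (X x0 ω, S x0 ω) ∂P := by
    intro m h hh
    rw [← integral_map (hpairmeas m).aemeasurable hh.aestronglyMeasurable, hident m,
      integral_map (hpairmeas x0).aemeasurable hh.aestronglyMeasurable]
  have hS0mem : MemLp (S x0) 2 P :=
    (memLp_two_iff_integrable_sq (hSmeas x0).aestronglyMeasurable).2 hSL2
  have hSmem : ∀ m, MemLp (S m) 2 P := by
    intro m
    have h1 : MemLp (fun p : (Fin d → ℝ) × ℝ => p.2) 2
        (Measure.map (fun ω => (X x0 ω, S x0 ω)) P) := by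
      rw [memLp_map_measure_iff measurable_snd.aestronglyMeasurable (hpairmeas x0).aemeasurable]
      exact hS0mem
    rw [← hident m] at h1
    exact (memLp_map_measure_iff measurable_snd.aestronglyMeasurable
      (hpairmeas m).aemeasurable).1 h1
  have hFmem : ∀ k m, MemLp (fun ω => S m ω * φ k (X m ω)) 2 P := by
    intro k m
    refine MemLp.of_le ((hSmem m).const_mul (Cφ k))
      (((hSmeas m).mul ((hφmeas k).comp (hXmeas m))).aestronglyMeasurable)
      (ae_of_all _ fun ω => ?_)
    rw [norm_eq_abs, norm_eq_abs, abs_mul, abs_mul, abs_of_nonneg (hCφ0 k), mul_comm (Cφ k)]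
    exact mul_le_mul_of_nonneg_left (hCφ k _) (abs_nonneg _)
  have hFint : ∀ k m, Integrable (fun ω => S m ω * φ k (X m ω)) P := fun k m =>
    (hFmem k m).integrable one_le_two
  -- mean of S φ(X)
  have hmean0 : ∀ k, ∫ ω, S x0 ω * φ k (X x0 ω) ∂P = α k := by
    intro k
    have hm' : MeasurableSpace.comap (X x0) inferInstance ≤ _ := (hXmeas x0).comap_le
    haveI : SigmaFinite (P.trim hm') := by infer_instance
    have hXm' : Measurable[MeasurableSpace.comap (X x0) inferInstance] (X x0) :=
      Measurable.of_comap_le le_rfl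
    have hg : StronglyMeasurable[MeasurableSpace.comap (X x0) inferInstance]
        (fun ω => φ k (X x0 ω)) := ((hφmeas k).comp hXm').stronglyMeasurable
    have hSint : Integrable (S x0) P := hS0mem.integrable one_le_two
    have hfgint : Integrable ((fun ω => φ k (X x0 ω)) * S x0) P :=
      Integrable.bdd_mul hSint ((hφmeas k).comp (hXmeas x0)).aestronglyMeasurable
        (ae_of_all _ fun ω => by rw [norm_eq_abs]; exact hCφ k _)
    have hpull := condExp_mul_of_stronglyMeasurable_left hg hfgint hSint
    calc ∫ ω, S x0 ω * φ k (X x0 ω) ∂P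
        = ∫ ω, ((fun ω => φ k (X x0 ω)) * S x0) ω ∂P := by
          simp only [Pi.mul_apply]
          exact integral_congr_ae (ae_of_all _ fun ω => mul_comm _ _)
      _ = ∫ ω, (P[(fun ω => φ k (X x0 ω)) * S x0
            | MeasurableSpace.comap (X x0) inferInstance]) ω ∂P :=
          (integral_condExp hm').symm
      _ = ∫ ω, φ k (X x0 ω) * (P[S x0 | MeasurableSpace.comap (X x0) inferInstance]) ω ∂P := by
          refine integral_congr_ae (hpull.mono fun ω h => ?_)
          simpa using h
      _ = ∫ ω, φ k (X x0 ω) * y (X x0 ω) ∂P := by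
          have hcond' : P[S x0 | MeasurableSpace.comap (X x0) inferInstance]
              =ᵐ[P] fun ω => y (X x0 ω) := hcond
          refine integral_congr_ae (hcond'.mono fun ω h => ?_)
          dsimp only at h ⊢
          rw [h]
      _ = ∫ p, φ k p * y p ∂(Measure.map (X x0) P) :=
          (integral_map (hXmeas x0).aemeasurable
            ((hφmeas k).mul hymeas).aestronglyMeasurable).symm
      _ = ∫ p, φ k p * y p ∂ν := by rw [hlaw]
      _ = α k := by rw [hα k]; simp_rw [mul_comm]
  have hmean : ∀ k m, ∫ ω, S m ω * φ k (X m ω) ∂P = α k := by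
    intro k m
    rw [hmap m (fun p => p.2 * φ k p.1) (measurable_snd.mul ((hφmeas k).comp measurable_fst))]
    exact hmean0 k
  have hsqbound : ∀ k m, ∫ ω, (S m ω * φ k (X m ω))^2 ∂P ≤ (Cφ k)^2 * ∫ ω, (S x0 ω)^2 ∂P := by
    intro k m
    rw [hmap m (fun p => (p.2 * φ k p.1)^2)
      ((measurable_snd.mul ((hφmeas k).comp measurable_fst)).pow_const 2)]
    calc ∫ ω, (S x0 ω * φ k (X x0 ω))^2 ∂P
        ≤ ∫ ω, (Cφ k)^2 * (S x0 ω)^2 ∂P := by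
          refine integral_mono_of_nonneg (ae_of_all _ fun ω => sq_nonneg _)
            (hSL2.const_mul _) (ae_of_all _ fun ω => ?_)
          have h1 : (φ k (X x0 ω))^2 ≤ (Cφ k)^2 := by
            rw [← sq_abs]
            exact pow_le_pow_left₀ (abs_nonneg _) (hCφ k _) 2
          calc (S x0 ω * φ k (X x0 ω))^2 = (φ k (X x0 ω))^2 * (S x0 ω)^2 := by ring
            _ ≤ (Cφ k)^2 * (S x0 ω)^2 := mul_le_mul_of_nonneg_right h1 (sq_nonneg _)
      _ = (Cφ k)^2 * ∫ ω, (S x0 ω)^2 ∂P := integral_const_mul _ _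
  -- centered variables
  set g : (Fin d → ℕ) → Fin M → Ω → ℝ := fun k m ω => S m ω * φ k (X m ω) - α k with hgdef
  have hgmem : ∀ k m, MemLp (g k m) 2 P := fun k m => (hFmem k m).sub (memLp_const _)
  have hgint : ∀ k m, Integrable (g k m) P := fun k m => (hgmem k m).integrable one_le_two
  have hgmean : ∀ k m, ∫ ω, g k m ω ∂P = 0 := by
    intro k m
    rw [hgdef]
    simp only []
    rw [integral_sub (hFint k m) (integrable_const _), hmean k m, integral_const]
    simp
  have hgcross : ∀ k, ∀ m m' : Fin M, m ≠ m' → ∫ ω, g k m ω * g k m' ω ∂P = 0 := by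
    intro k m m' hne
    have hmeasH : Measurable (fun p : (Fin d → ℝ) × ℝ => p.2 * φ k p.1 - α k) :=
      (measurable_snd.mul ((hφmeas k).comp measurable_fst)).sub measurable_const
    have hind2 := (hindep.comp (fun _ => fun p : (Fin d → ℝ) × ℝ => p.2 * φ k p.1 - α k)
      (fun _ => hmeasH)).indepFun hne
    have heq : ∫ ω, g k m ω * g k m' ω ∂P = (∫ ω, g k m ω ∂P) * ∫ ω, g k m' ω ∂P :=
      hind2.integral_mul_eq_mul_integral (hgint k m).1 (hgint k m').1
    rw [heq, hgmean, hgmean, mul_zero]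
  have hvar : ∀ k, ∫ ω, ((M:ℝ)⁻¹ * (∑ m, S m ω * φ k (X m ω)) - α k)^2 ∂P
      ≤ (Cφ k)^2 * (∫ ω, (S x0 ω)^2 ∂P) / M := by
    intro k
    have hMne : (M:ℝ) ≠ 0 := Nat.cast_ne_zero.2 hM.ne'
    have hrw : ∀ ω, (M:ℝ)⁻¹ * (∑ m, S m ω * φ k (X m ω)) - α k
        = (M:ℝ)⁻¹ * ∑ m, g k m ω := by
      intro ω
      rw [hgdef]
      simp only []
      rw [Finset.sum_sub_distrib, Finset.sum_const, Finset.card_univ, Fintype.card_fin, nsmul_eq_mul]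
      field_simp
    simp_rw [hrw, mul_pow]
    rw [integral_const_mul]
    have hexp : ∫ ω, (∑ m, g k m ω)^2 ∂P = ∑ m : Fin M, ∫ ω, (g k m ω)^2 ∂P := by
      have hsq : ∀ ω, (∑ m, g k m ω)^2 = ∑ m : Fin M, ∑ m' : Fin M, g k m ω * g k m' ω :=
        fun ω => by rw [sq, Finset.sum_mul_sum]
      simp_rw [hsq]
      rw [integral_finset_sum _ fun m _ => integrable_finset_sum _ fun m' _ =>
        my_integrable_mul_of_memL2 (hgmem k m) (hgmem k m')]
      refine Finset.sum_congr rfl fun m _ => ?_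
      rw [integral_finset_sum _ fun m' _ => my_integrable_mul_of_memL2 (hgmem k m) (hgmem k m'),
        Finset.sum_eq_single_of_mem m (Finset.mem_univ m)]
      · simp_rw [← sq]
      · intro m' _ hne
        exact hgcross k m m' (Ne.symm hne)
    rw [hexp]
    have hgsq : ∀ m, ∫ ω, (g k m ω)^2 ∂P ≤ (Cφ k)^2 * ∫ ω, (S x0 ω)^2 ∂P := by
      intro m
      have h2 : ∫ ω, (g k m ω)^2 ∂P
          = ∫ ω, (S m ω * φ k (X m ω))^2 ∂P - (α k)^2 := by
        have hptw : ∀ ω, (g k m ω)^2 = (S m ω * φ k (X m ω))^2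
            - (2 * α k) * (S m ω * φ k (X m ω)) + (α k)^2 := fun ω => by
          rw [hgdef]; ring
        simp_rw [hptw]
        have hdiff : Integrable (fun ω => (S m ω * φ k (X m ω))^2
            - (2 * α k) * (S m ω * φ k (X m ω))) P :=
          ((hFmem k m).integrable_sq).sub ((hFint k m).const_mul _)
        rw [integral_add hdiff (integrable_const _),
          integral_sub ((hFmem k m).integrable_sq) ((hFint k m).const_mul _),
          integral_const_mul, hmean k m, integral_const]
        simp only [measure_univ, probReal_univ, ENNReal.toReal_one, smul_eq_mul, one_mul]
        ring
      rw [h2]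
      have := hsqbound k m
      nlinarith [sq_nonneg (α k)]
    calc ((M:ℝ)⁻¹)^2 * ∑ m : Fin M, ∫ ω, (g k m ω)^2 ∂P
        ≤ ((M:ℝ)⁻¹)^2 * ∑ m : Fin M, ((Cφ k)^2 * ∫ ω, (S x0 ω)^2 ∂P) :=
          mul_le_mul_of_nonneg_left (Finset.sum_le_sum fun m _ => hgsq m) (by positivity)
      _ = (Cφ k)^2 * (∫ ω, (S x0 ω)^2 ∂P) / M := by
          rw [Finset.sum_const, Finset.card_univ, Fintype.card_fin]
          field_simp
          ring
  -- pointwise expansion over ν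
  have hexp2 : ∀ ω : Ω,
      ∫ x, ((∑ k ∈ Γ, ((M:ℝ)⁻¹ * ∑ m, S m ω * φ k (X m ω)) * φ k x) - y x)^2 ∂ν
      = ∑ k ∈ Γ, (((M:ℝ)⁻¹ * ∑ m, S m ω * φ k (X m ω)) - α k)^2
        + (∫ x, (y x)^2 ∂ν - ∑ k ∈ Γ, (α k)^2) := fun ω =>
    my_expand ν φ hortho y hyL2 hyφint hφφint α hα Γ _
  simp_rw [hexp2]
  have hcmem : ∀ k, MemLp (fun ω => ((M:ℝ)⁻¹ * ∑ m, S m ω * φ k (X m ω)) - α k) 2 P := by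
    intro k
    have hsum : MemLp (fun ω => ∑ m : Fin M, S m ω * φ k (X m ω)) 2 P :=
      memLp_finset_sum _ fun m _ => hFmem k m
    exact (hsum.const_mul _).sub (memLp_const _)
  have hc2int : ∀ k,
      Integrable (fun ω => (((M:ℝ)⁻¹ * ∑ m, S m ω * φ k (X m ω)) - α k)^2) P :=
    fun k => (hcmem k).integrable_sq
  rw [integral_add (integrable_finset_sum _ fun k _ => hc2int k) (integrable_const _),
    integral_finset_sum _ fun k _ => hc2int k, integral_const]
  simp only [measure_univ, probReal_univ, ENNReal.toReal_one, smul_eq_mul, one_mul]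
  -- Parseval and tail sum
  have hPar0 := my_parseval ν φ hφmeas hortho hcomplete y hymeas hyL2 Cφ hCφ
  have hPar : HasSum (fun k => (α k)^2) (∫ x, (y x)^2 ∂ν) := by
    have : (fun k => (α k)^2) = fun k => (∫ x, y x * φ k x ∂ν)^2 := funext fun k => by rw [hα]
    rw [this]
    exact hPar0
  have htail : ∫ x, (y x)^2 ∂ν - ∑ k ∈ Γ, (α k)^2
      = ∑' k : {k : Fin d → ℕ // k ∉ Γ}, (α k)^2 := by
    have h1 := Summable.sum_add_tsum_compl (s := Γ) (f := fun k => (α k)^2) hPar.summable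
    rw [hPar.tsum_eq] at h1
    have h2 : (∑' k : ↑((Γ : Set (Fin d → ℕ))ᶜ), (α (k:Fin d → ℕ))^2)
        = ∑' k : {k : Fin d → ℕ // k ∉ Γ}, (α k)^2 := by
      rfl
    linarith [h1, h2]
  rw [htail]
  have hS2nonneg : 0 ≤ ∫ ω, (S x0 ω)^2 ∂P := integral_nonneg fun ω => sq_nonneg _
  have hfinal : ∑ k ∈ Γ, ∫ ω, (((M:ℝ)⁻¹ * ∑ m, S m ω * φ k (X m ω)) - α k)^2 ∂P
      ≤ ((∑ k ∈ Γ, (Cφ k)^2) / M) * ∫ ω, (S x0 ω)^2 ∂P := by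
    calc ∑ k ∈ Γ, ∫ ω, (((M:ℝ)⁻¹ * ∑ m, S m ω * φ k (X m ω)) - α k)^2 ∂P
        ≤ ∑ k ∈ Γ, (Cφ k)^2 * (∫ ω, (S x0 ω)^2 ∂P) / M :=
          Finset.sum_le_sum fun k _ => hvar k
      _ = ((∑ k ∈ Γ, (Cφ k)^2) / M) * ∫ ω, (S x0 ω)^2 ∂P := by
          rw [← Finset.sum_div, ← Finset.sum_mul]
          ring
  linarith [hfinal]
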